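/- arXiv:1405.1150 — 2 statements merged into one kernel-verified Lean document; each statement's English description precedes it below -/
import Mathlib

section
/- The principal congruence subgroup Γ(2) ⊆ SL₂(ℤ) preserves the mod-2 reduction of primitive vectors: if v, w ∈ ℤ² are primitive vectors and there exists M ∈ Γ(2) with Mv = w, then v ≡ w (mod 2). Conversely, if v and w are primitive vectors with v ≡ w (mod 2), then there exists M ∈ Γ(2) with Mv = w. -/
private lemma key_zmod2 : ∀ α β a b c d : ZMod 2, α*a+β*b=1 → α*c+β*d=1 →
    ∃ t : ZMod 2, c + t*β = a ∧ d - t*α = b := by decide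

/-- `Γ(2)` preserves the mod 2 reduction of primitive vectors, and conversely acts
transitively on primitive vectors with the same mod 2 reduction. -/
theorem gamma_two_orbit_iff_mod_two (v w : Fin 2 → ℤ)
    (hv : IsCoprime (v 0) (v 1)) (hw : IsCoprime (w 0) (w 1)) :
    (∃ M ∈ (Matrix.SpecialLinearGroup.map (n := Fin 2) (Int.castRingHom (ZMod 2))).ker,
        Matrix.mulVec (M : Matrix (Fin 2) (Fin 2) ℤ) v = w) ↔
      (∀ i, (v i : ZMod 2) = (w i : ZMod 2)) := by
  constructor
  · rintro ⟨M, hM, rfl⟩ i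
    rw [MonoidHom.mem_ker] at hM
    have h1 : ∀ i j, ((M : Matrix (Fin 2) (Fin 2) ℤ) i j : ZMod 2)
        = if i = j then 1 else 0 := by
      intro i j
      have h2 := congrArg
        (fun N : Matrix.SpecialLinearGroup (Fin 2) (ZMod 2) =>
          (N : Matrix (Fin 2) (Fin 2) (ZMod 2)) i j) hM
      simpa [Matrix.SpecialLinearGroup.map_apply_coe, Matrix.map_apply,
        Matrix.one_apply] using h2
    have e00 := h1 0 0
    have e01 := h1 0 1
    have e10 := h1 1 0
    have e11 := h1 1 1
    simp only [if_pos rfl, if_true, eq_self_iff_true] at e00 e11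
    simp only [if_neg (by decide : (0 : Fin 2) ≠ 1)] at e01
    simp only [if_neg (by decide : (1 : Fin 2) ≠ 0)] at e10
    fin_cases i <;>
      simp only [Matrix.mulVec, dotProduct, Fin.sum_univ_two,
        Fin.isValue] <;> push_cast
    · rw [e00, e01]; ring
    · rw [e10, e11]; ring
  · intro h
    obtain ⟨a, b, hab⟩ := hv
    obtain ⟨c, d, hcd⟩ := hw
    have hab2 : (v 0 : ZMod 2) * a + (v 1 : ZMod 2) * b = 1 := by
      have := congrArg (fun z : ℤ => (z : ZMod 2)) hab
      push_cast at this; linear_combination this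
    have hcd2 : (v 0 : ZMod 2) * c + (v 1 : ZMod 2) * d = 1 := by
      have := congrArg (fun z : ℤ => (z : ZMod 2)) hcd
      push_cast at this
      rw [h 0, h 1]; linear_combination this
    obtain ⟨t₂, ht1, ht2⟩ := key_zmod2 _ _ _ _ _ _ hab2 hcd2
    set t : ℤ := (t₂.val : ℤ) with ht_def
    have htcast : ((t : ℤ) : ZMod 2) = t₂ := by
      simp [ht_def, ZMod.natCast_val, ZMod.intCast_cast]
    set c' : ℤ := c + t * w 1 with hc'
    set d' : ℤ := d - t * w 0 with hd'
    have hc'2 : ((c' : ℤ) : ZMod 2) = (a : ZMod 2) := by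
      rw [hc']; push_cast
      rw [htcast, ← h 1]; linear_combination ht1
    have hd'2 : ((d' : ℤ) : ZMod 2) = (b : ZMod 2) := by
      rw [hd']; push_cast
      rw [htcast, ← h 0]; linear_combination ht2
    have hdet1 : c' * w 0 + d' * w 1 = 1 := by
      rw [hc', hd']; linear_combination hcd
    set A : Matrix (Fin 2) (Fin 2) ℤ := !![w 0, -d'; w 1, c'] with hA
    set B : Matrix (Fin 2) (Fin 2) ℤ := !![a, b; -(v 1), v 0] with hB
    have hdetA : A.det = 1 := by
      rw [hA, Matrix.det_fin_two_of]; linear_combination hdet1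
    have hdetB : B.det = 1 := by
      rw [hB, Matrix.det_fin_two_of]; linear_combination hab
    refine ⟨⟨A * B, by rw [Matrix.det_mul, hdetA, hdetB, mul_one]⟩, ?_, ?_⟩
    · refine MonoidHom.mem_ker.mpr ?_
      ext i j
      simp only [Matrix.SpecialLinearGroup.map_apply_coe, Matrix.map_apply,
        Matrix.SpecialLinearGroup.coe_one]
      change Matrix.map (A * B) (Int.castRingHom (ZMod 2)) i j = (1 : Matrix (Fin 2) (Fin 2) (ZMod 2)) i j
      rw [hA, hB, Matrix.mul_fin_two]
      fin_cases i <;> fin_cases j <;>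
        simp only [RingHom.mapMatrix_apply, Matrix.map_apply, Matrix.one_apply,
          Matrix.cons_val', Matrix.cons_val_zero, Matrix.cons_val_one,
          Matrix.head_cons, Matrix.head_fin_const, Matrix.empty_val',
          Matrix.cons_val_fin_one, Matrix.of_apply, Fin.isValue, Fin.mk_zero,
          Fin.mk_one, Int.coe_castRingHom] <;>
        push_cast <;> simp only [← h, hc'2, hd'2]
      · linear_combination hab2
      · ring
      · ring
      · linear_combination hab2
    · show Matrix.mulVec (A * B) v = w
      rw [← Matrix.mulVec_mulVec]
      have hBv : Matrix.mulVec B v = ![1, 0] := by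
        funext i
        fin_cases i <;>
          simp [hB, Matrix.mulVec, dotProduct, Fin.sum_univ_two]
        · linear_combination hab
        · ring
      rw [hBv]
      funext i
      fin_cases i <;>
        simp [hA, Matrix.mulVec, dotProduct, Fin.sum_univ_two]
end

section
/- Let θ₁, …, θₙ be real numbers such that the only ℚ-linear relation among θ₁, …, θₙ, π is a scalar multiple of θ₁ + ⋯ + θₙ = (n−2)π (n ≥ 3). Then the n−1 real numbers θ₁ − θ₂, θ₁ − θ₃, …, θ₁ − θₙ together with π are linearly independent over ℚ; consequently the subgroup of ℝ/2πℤ generated by the elements θ₁ − θᵢ (i = 2,…,n) is free abelian of rank n − 1. -/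
/-- If the only `ℚ`-linear relation among `θ₁, …, θ_{n+1}, π` is a multiple of
`θ₁ + ⋯ + θ_{n+1} = (n−1)π` (so the polygon has `n+1 ≥ 3` vertices), then the `n` numbers
`θ₁ − θᵢ` (`i = 2, …, n+1`) together with `π` are linearly independent over `ℚ`, and
the subgroup of `ℝ/2πℤ` generated by the `θ₁ − θᵢ` is free abelian of rank `n`. -/
theorem angle_differences_linear_independent (n : ℕ) (hn : 2 ≤ n) (θ : Fin (n + 1) → ℝ)
    (h : ∀ (q : Fin (n + 1) → ℚ) (q' : ℚ),
      (∑ i, (q i : ℝ) * θ i) + (q' : ℝ) * Real.pi = 0 →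
      ∃ t : ℚ, (∀ i, q i = t) ∧ q' = -t * ((n : ℚ) + 1 - 2)) :
    LinearIndependent ℚ
        (Fin.cons Real.pi (fun i : Fin n => θ 0 - θ i.succ) : Fin (n + 1) → ℝ) ∧
      Nonempty ((AddSubgroup.closure
          (Set.range fun i : Fin n =>
            ((θ 0 - θ i.succ : ℝ) : AddCircle (2 * Real.pi)))) ≃+ (Fin n → ℤ)) := by
  -- Key lemma: any rational relation among the differences and π is trivial.
  have key : ∀ (g : Fin n → ℚ) (c : ℚ),
      (∑ i, (g i : ℝ) * (θ 0 - θ i.succ)) + (c : ℝ) * Real.pi = 0 →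
      (∀ i, g i = 0) ∧ c = 0 := by
    intro g c hg
    set q : Fin (n + 1) → ℚ := Fin.cons (∑ i, g i) (fun i => -g i) with hq
    have hsum : (∑ j, (q j : ℝ) * θ j) + (c : ℝ) * Real.pi = 0 := by
      rw [Fin.sum_univ_succ]
      have h1 : (∑ i : Fin n, ((q i.succ : ℝ)) * θ i.succ)
          = ∑ i : Fin n, (-(g i : ℝ)) * θ i.succ := by
        apply Finset.sum_congr rfl
        intro i _
        simp [hq]
      have h0 : (q 0 : ℝ) = ∑ i : Fin n, (g i : ℝ) := by
        simp [hq]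
      rw [h1, h0]
      have h2 : (∑ i : Fin n, (g i : ℝ)) * θ 0 + ∑ i : Fin n, (-(g i : ℝ)) * θ i.succ
          = ∑ i : Fin n, (g i : ℝ) * (θ 0 - θ i.succ) := by
        rw [Finset.sum_mul, ← Finset.sum_add_distrib]
        exact Finset.sum_congr rfl fun i _ => by ring
      rw [h2]
      exact hg
    obtain ⟨t, ht, ht'⟩ := h q c hsum
    have hgi : ∀ i : Fin n, g i = -t := by
      intro i
      have := ht i.succ
      simp [hq] at this
      linarith [this]
    have h0 : (∑ i, g i) = t := by
      have := ht 0
      simpa [hq] using this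
    have hsum2 : (∑ i : Fin n, g i) = (n : ℚ) * (-t) := by
      rw [Finset.sum_congr rfl fun i _ => hgi i]
      simp [mul_comm]
    have ht0 : t = 0 := by
      rw [hsum2] at h0
      have hn' : (0 : ℚ) < (n : ℚ) + 1 := by positivity
      nlinarith
    constructor
    · intro i; rw [hgi i, ht0, neg_zero]
    · rw [ht', ht0]; ring
  have part1 : LinearIndependent ℚ
      (Fin.cons Real.pi (fun i : Fin n => θ 0 - θ i.succ) : Fin (n + 1) → ℝ) := by
    rw [Fintype.linearIndependent_iff]
    intro g hg
    rw [Fin.sum_univ_succ] at hg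
    simp only [Fin.cons_zero, Fin.cons_succ] at hg
    have hg' : (∑ i : Fin n, ((g i.succ : ℝ)) * (θ 0 - θ i.succ)) + (g 0 : ℝ) * Real.pi = 0 := by
      rw [← hg]
      simp [Rat.smul_def]
      ring
    obtain ⟨h1, h2⟩ := key (fun i => g i.succ) (g 0) hg'
    intro i
    refine Fin.cases h2 (fun j => h1 j) i
  refine ⟨part1, ?_⟩
  -- linear independence over ℤ in the circle
  set v : Fin n → AddCircle (2 * Real.pi) :=
    fun i : Fin n => ((θ 0 - θ i.succ : ℝ) : AddCircle (2 * Real.pi)) with hv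
  have hli : LinearIndependent ℤ v := by
    rw [Fintype.linearIndependent_iff]
    intro g hg
    have hcoe : (QuotientAddGroup.mk' (AddSubgroup.zmultiples (2 * Real.pi)))
        (∑ i : Fin n, g i • (θ 0 - θ i.succ)) = 0 := by
      rw [map_sum]
      simp only [map_zsmul]
      exact hg
    rw [QuotientAddGroup.mk'_apply, AddCircle.coe_eq_zero_iff] at hcoe
    obtain ⟨k, hk⟩ := hcoe
    have hk' : (∑ i : Fin n, (g i : ℝ) * (θ 0 - θ i.succ)) = (k : ℝ) * (2 * Real.pi) := by
      simp only [zsmul_eq_mul] at hk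
      exact hk.symm
    have hreal : (∑ i : Fin n, ((g i : ℚ) : ℝ) * (θ 0 - θ i.succ))
        + (((-2 * k : ℚ)) : ℝ) * Real.pi = 0 := by
      push_cast
      rw [hk']
      ring
    obtain ⟨h1, _⟩ := key (fun i => (g i : ℚ)) (-2 * k) hreal
    intro i
    exact_mod_cast h1 i
  have hspan : (Submodule.span ℤ (Set.range v)).toAddSubgroup
      = AddSubgroup.closure (Set.range v) := Submodule.span_int_eq_addSubgroupClosure _
  rw [← hspan]
  exact ⟨((Module.Basis.span hli).equivFun).toAddEquiv⟩
end
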